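/- arXiv:1409.5249 — 5 statements merged into one kernel-verified Lean document; each statement's English description precedes it below -/
import Mathlib

section
/- Let f : ℝ^N → ℝ and g : ℝ^N → ℝ^m be continuous, let (y_j) be a sequence in ℝ^m with y_j ≥ 0, and let x_j be a local minimizer of x ↦ f(x) + Σ_k exp((y_j)_k g_k(x)), all with a common radius of local minimality r > 0. Suppose x_j → x̄, g(x̄) ≤ 0, and (y_j)_k · g_k(x_j) → 0 for each k. Then x̄ is a local minimizer of f subject to g(x) ≤ 0. -/
theorem stmt_1 {N m : ℕ}
    (f : EuclideanSpace ℝ (Fin N) → ℝ) (g : Fin m → EuclideanSpace ℝ (Fin N) → ℝ)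
    (hf : Continuous f) (hg : ∀ k, Continuous (g k))
    (y : ℕ → Fin m → ℝ) (hy : ∀ j k, 0 ≤ y j k)
    (x : ℕ → EuclideanSpace ℝ (Fin N)) (r : ℝ) (hr : 0 < r)
    (hmin : ∀ j, ∀ z, dist z (x j) ≤ r →
      f (x j) + ∑ k, Real.exp (y j k * g k (x j)) ≤ f z + ∑ k, Real.exp (y j k * g k z))
    (xbar : EuclideanSpace ℝ (Fin N))
    (hconv : Filter.Tendsto x Filter.atTop (nhds xbar))
    (hfeas : ∀ k, g k xbar ≤ 0)
    (hslack : ∀ k, Filter.Tendsto (fun j => y j k * g k (x j)) Filter.atTop (nhds 0)) :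
    IsLocalMinOn f {x | ∀ k, g k x ≤ 0} xbar := by
  have hball : Metric.ball xbar (r / 2) ∈ nhds xbar :=
    Metric.ball_mem_nhds _ (by linarith)
  rw [IsLocalMinOn, IsMinFilter]
  filter_upwards [mem_nhdsWithin_of_mem_nhds hball, self_mem_nhdsWithin] with z hz hzfeas
  -- limit of the penalized values
  have hsum : Filter.Tendsto (fun j => ∑ k, Real.exp (y j k * g k (x j)))
      Filter.atTop (nhds (m : ℝ)) := by
    have : Filter.Tendsto (fun j => ∑ k : Fin m, Real.exp (y j k * g k (x j)))
        Filter.atTop (nhds (∑ _k : Fin m, (1 : ℝ))) := by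
      refine tendsto_finset_sum _ fun k _ => ?_
      simpa [Function.comp_def] using (Real.continuous_exp.tendsto 0).comp (hslack k)
    simpa using this
  have hlim : Filter.Tendsto (fun j => f (x j) + ∑ k, Real.exp (y j k * g k (x j)))
      Filter.atTop (nhds (f xbar + m)) :=
    ((hf.continuousAt.tendsto).comp hconv).add hsum
  have hbound : ∀ᶠ j in Filter.atTop,
      f (x j) + ∑ k, Real.exp (y j k * g k (x j)) ≤ f z + m := by
    have hx : ∀ᶠ j in Filter.atTop, dist (x j) xbar < r / 2 :=
      (Metric.tendsto_nhds.mp hconv) (r / 2) (by linarith)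
    filter_upwards [hx] with j hj
    have hd : dist z (x j) ≤ r := by
      have := dist_triangle z xbar (x j)
      have hz' : dist z xbar < r / 2 := Metric.mem_ball.mp hz
      rw [dist_comm (x j) xbar] at hj
      linarith
    have h1 := hmin j z hd
    have h2 : ∑ k, Real.exp (y j k * g k z) ≤ (m : ℝ) := by
      calc ∑ k, Real.exp (y j k * g k z) ≤ ∑ _k : Fin m, (1 : ℝ) := by
            refine Finset.sum_le_sum fun k _ => ?_
            exact Real.exp_le_one_iff.mpr (mul_nonpos_of_nonneg_of_nonpos (hy j k) (hzfeas k))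
        _ = (m : ℝ) := by simp
    linarith
  have := le_of_tendsto hlim hbound
  linarith
end

section
/- Let f, g : ℝ^N → ℝ be twice continuously differentiable, and let x : (0,∞) → ℝ^N be a differentiable map such that for each y > 0, x(y) is a local minimizer of z ↦ f(z) + exp(y·g(z)) (so both the first-order condition ∇f(x) + y e^{y g(x)} ∇g(x) = 0 and positive semidefiniteness of the Hessian of L(·,y) at x(y) hold). Then for every y > 0, (1 + y·g(x(y))) · (d/dy)[g(x(y))] ≤ 0. -/
open scoped RealInnerProductSpace

theorem stmt_2 {N : ℕ}
    (f g : EuclideanSpace ℝ (Fin N) → ℝ)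
    (hf : ContDiff ℝ 2 f) (hg : ContDiff ℝ 2 g)
    (x : ℝ → EuclideanSpace ℝ (Fin N))
    (hx : ∀ y ∈ Set.Ioi (0 : ℝ), DifferentiableAt ℝ x y)
    (hfoc : ∀ y ∈ Set.Ioi (0 : ℝ),
      gradient f (x y) + (y * Real.exp (y * g (x y))) • gradient g (x y) = 0)
    (hhess : ∀ y ∈ Set.Ioi (0 : ℝ), ∀ v : EuclideanSpace ℝ (Fin N),
      0 ≤ ⟪v, fderiv ℝ (fun z => gradient (fun w => f w + Real.exp (y * g w)) z) (x y) v⟫) :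
    ∀ y ∈ Set.Ioi (0 : ℝ),
      (1 + y * g (x y)) * deriv (fun s => g (x s)) y ≤ 0 := by
  intro y hy
  have hy0 : (0:ℝ) < y := hy
  have hfd : Differentiable ℝ f := hf.differentiable two_ne_zero
  have hgd : Differentiable ℝ g := hg.differentiable two_ne_zero
  -- differentiability of the gradients
  have hGf : Differentiable ℝ (gradient f) := by
    have h1 : ContDiff ℝ 1 (fderiv ℝ f) := hf.fderiv_right (le_refl 2)
    exact ((InnerProductSpace.toDual ℝ
      (EuclideanSpace ℝ (Fin N))).symm.toContinuousLinearEquiv.differentiable).comp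
      (h1.differentiable one_ne_zero)
  have hGg : Differentiable ℝ (gradient g) := by
    have h1 : ContDiff ℝ 1 (fderiv ℝ g) := hg.fderiv_right (le_refl 2)
    exact ((InnerProductSpace.toDual ℝ
      (EuclideanSpace ℝ (Fin N))).symm.toContinuousLinearEquiv.differentiable).comp
      (h1.differentiable one_ne_zero)
  set x₀ : EuclideanSpace ℝ (Fin N) := x y with hx₀
  set v : EuclideanSpace ℝ (Fin N) := deriv x y with hv
  set G : EuclideanSpace ℝ (Fin N) := gradient g x₀ with hGdef
  have ha0 : 0 < Real.exp (y * g x₀) := Real.exp_pos _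
  -- fderiv of g in terms of gradient
  have hinner : ∀ z w : EuclideanSpace ℝ (Fin N),
      fderiv ℝ g z w = ⟪gradient g z, w⟫ := by
    intro z w
    have h1 := (hgd.differentiableAt (x := z)).hasGradientAt
    rw [hasGradientAt_iff_hasFDerivAt] at h1
    rw [h1.fderiv, InnerProductSpace.toDual_apply_apply]
  -- derivative of s ↦ g (x s)
  have hxD : HasDerivAt x v y := (hx y hy).hasDerivAt
  have hgx : HasDerivAt (fun s => g (x s)) (fderiv ℝ g x₀ v) y :=
    (hgd.differentiableAt.hasFDerivAt).comp_hasDerivAt y hxD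
  set h' : ℝ := deriv (fun s => g (x s)) y with hh'
  have hh'eq : h' = ⟪G, v⟫ := by rw [hh', hgx.deriv, hinner]
  have hrw : fderiv ℝ g x₀ v = h' := by rw [hinner, hh'eq]
  -- second-derivative operators
  set A := fderiv ℝ (gradient f) x₀ with hA
  set B := fderiv ℝ (gradient g) x₀ with hB
  have hAd : HasFDerivAt (gradient f) A x₀ := (hGf x₀).hasFDerivAt
  have hBd : HasFDerivAt (gradient g) B x₀ := (hGg x₀).hasFDerivAt
  -- Step B: differentiate the first-order condition in y
  have hGfx : HasDerivAt (fun s => gradient f (x s)) (A v) y := hAd.comp_hasDerivAt y hxD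
  have hGgx : HasDerivAt (fun s => gradient g (x s)) (B v) y := hBd.comp_hasDerivAt y hxD
  have hm : HasDerivAt (fun s => s * g (x s)) (1 * g x₀ + y * (fderiv ℝ g x₀ v)) y :=
    (hasDerivAt_id y).mul hgx
  have hexp : HasDerivAt (fun s => Real.exp (s * g (x s)))
      (Real.exp (y * g x₀) * (1 * g x₀ + y * (fderiv ℝ g x₀ v))) y := hm.exp
  have hc : HasDerivAt (fun s => s * Real.exp (s * g (x s)))
      (1 * Real.exp (y * g x₀)
        + y * (Real.exp (y * g x₀) * (1 * g x₀ + y * (fderiv ℝ g x₀ v)))) y :=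
    (hasDerivAt_id y).mul hexp
  have hΦ := hGfx.add (hc.smul hGgx)
  have hΦ0 : HasDerivAt (fun _ : ℝ => (0 : EuclideanSpace ℝ (Fin N)))
      (A v + ((y * Real.exp (y * g x₀)) • (B v)
        + (1 * Real.exp (y * g x₀)
          + y * (Real.exp (y * g x₀) * (1 * g x₀ + y * (fderiv ℝ g x₀ v)))) • G)) y := by
    refine hΦ.congr_of_eventuallyEq ?_
    filter_upwards [isOpen_Ioi.mem_nhds hy] with s hs
    exact (hfoc s hs).symm
  have huniq := hΦ0.unique (hasDerivAt_const y (0 : EuclideanSpace ℝ (Fin N)))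
  rw [hrw] at huniq
  have hkey : A v + ((Real.exp (y * g x₀) * (1 + y * g x₀ + y * (y * h'))) • G
      + (y * Real.exp (y * g x₀)) • (B v)) = 0 := by
    rw [← huniq]; module
  -- Step D: the gradient of the Lagrangian and the Hessian applied to v
  have hLgrad : ∀ z : EuclideanSpace ℝ (Fin N),
      gradient (fun w => f w + Real.exp (y * g w)) z
        = gradient f z + (y * Real.exp (y * g z)) • gradient g z := by
    intro z
    have h1 : HasFDerivAt (fun w => y * g w) (y • fderiv ℝ g z) z :=
      (hgd.differentiableAt.hasFDerivAt).const_mul y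
    have h2 : HasFDerivAt (fun w => Real.exp (y * g w))
        (Real.exp (y * g z) • (y • fderiv ℝ g z)) z :=
      by have := (Real.hasDerivAt_exp (y * g z)).comp_hasFDerivAt z h1; exact this
    have h3 : HasFDerivAt (fun w => f w + Real.exp (y * g w))
        (fderiv ℝ f z + Real.exp (y * g z) • (y • fderiv ℝ g z)) z :=
      (hfd.differentiableAt.hasFDerivAt).add h2
    rw [h3.hasGradientAt.gradient, map_add, LinearIsometryEquiv.map_smul,
      LinearIsometryEquiv.map_smul]
    show gradient f z + Real.exp (y * g z) • y • gradient g z = _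
    rw [smul_smul, mul_comm]
  have hsfd : HasFDerivAt (fun z => y * Real.exp (y * g z))
      ((y * (Real.exp (y * g x₀) * y)) • fderiv ℝ g x₀) x₀ := by
    have h1 : HasFDerivAt (fun w => y * g w) (y • fderiv ℝ g x₀) x₀ :=
      (hgd.differentiableAt.hasFDerivAt).const_mul y
    have h2 : HasFDerivAt (fun w => Real.exp (y * g w))
        (Real.exp (y * g x₀) • (y • fderiv ℝ g x₀)) x₀ :=
      by have := (Real.hasDerivAt_exp (y * g x₀)).comp_hasFDerivAt x₀ h1; exact this
    have h3 := h2.const_mul y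
    simpa only [smul_smul] using h3
  have hHd : HasFDerivAt (fun z => gradient (fun w => f w + Real.exp (y * g w)) z)
      (A + ((y * Real.exp (y * g x₀)) • B
        + ((y * (Real.exp (y * g x₀) * y)) • fderiv ℝ g x₀).smulRight G)) x₀ := by
    have h1 := hAd.add (hsfd.smul hBd)
    exact h1.congr_of_eventuallyEq (Filter.Eventually.of_forall fun z => hLgrad z)
  have hHv : fderiv ℝ (fun z => gradient (fun w => f w + Real.exp (y * g w)) z) x₀ v
      = A v + ((y * Real.exp (y * g x₀)) • (B v) + (y * (Real.exp (y * g x₀) * y) * h') • G) := by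
    rw [hHd.fderiv]
    simp only [ContinuousLinearMap.add_apply, ContinuousLinearMap.coe_smul',
      Pi.smul_apply, ContinuousLinearMap.smulRight_apply, ContinuousLinearMap.smul_apply, hrw,
      smul_eq_mul]
  -- combine
  have hfin : fderiv ℝ (fun z => gradient (fun w => f w + Real.exp (y * g w)) z) x₀ v
      = (-(Real.exp (y * g x₀) * (1 + y * g x₀))) • G := by
    rw [hHv]
    have hAv : A v = -((Real.exp (y * g x₀) * (1 + y * g x₀ + y * (y * h'))) • G
        + (y * Real.exp (y * g x₀)) • (B v)) := by
      rw [eq_neg_iff_add_eq_zero]; exact hkey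
    rw [hAv]; module
  have hpos := hhess y hy v
  rw [hfin, real_inner_smul_right, real_inner_comm, ← hh'eq] at hpos
  nlinarith [ha0]
end

section
/- Let f, g : ℝ^N → ℝ be twice continuously differentiable and convex, and let x : (0,∞) → ℝ^N be a differentiable map satisfying for each y > 0 the stationarity condition ∇f(x(y)) + G(y)∇g(x(y)) = 0, where G(y) = y·e^{y g(x(y))}. Then for every y > 0, G'(y) · (d/dy)[g(x(y))] ≤ 0. -/
open Set Filter InnerProductSpace Topology

/-- A differentiable convex function with zero Fréchet derivative at a point attains its
global minimum there. -/
theorem aux_min {E : Type*} [NormedAddCommGroup E] [NormedSpace ℝ E]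
    (F : E → ℝ) (hF : Differentiable ℝ F) (hc : ConvexOn ℝ Set.univ F)
    (a : E) (h0 : fderiv ℝ F a = 0) : ∀ b, F a ≤ F b := by
  intro b
  set L : ℝ →ᵃ[ℝ] E := AffineMap.lineMap a b
  have hcomp : ConvexOn ℝ Set.univ (F ∘ L) := by
    have := hc.comp_affineMap L
    simpa using this
  have hline : ∀ t : ℝ, HasDerivAt (fun t : ℝ => L t) (b - a) t := by
    intro t
    simp only [L, AffineMap.coe_lineMap]
    simpa using ((hasDerivAt_id t).smul_const (b - a)).add_const a
  have hder : HasDerivAt (F ∘ L) 0 0 := by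
    have h1 : HasFDerivAt F (fderiv ℝ F a) (L 0) := by
      simpa [L] using (hF (L 0)).hasFDerivAt
    have := h1.comp_hasDerivAt 0 (hline 0)
    simpa [h0] using this
  have := hcomp.le_slope_of_hasDerivWithinAt (Set.mem_univ (0:ℝ)) (Set.mem_univ (1:ℝ))
    one_pos (hder.hasDerivWithinAt)
  simpa [slope_def_field, L] using this

theorem stmt_3 {N : ℕ}
    (f g : EuclideanSpace ℝ (Fin N) → ℝ)
    (hf : ContDiff ℝ 2 f) (hg : ContDiff ℝ 2 g)
    (hfc : ConvexOn ℝ Set.univ f) (hgc : ConvexOn ℝ Set.univ g)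
    (x : ℝ → EuclideanSpace ℝ (Fin N))
    (hx : ∀ y ∈ Set.Ioi (0 : ℝ), DifferentiableAt ℝ x y)
    (G : ℝ → ℝ) (hG : ∀ y ∈ Set.Ioi (0 : ℝ), G y = y * Real.exp (y * g (x y)))
    (hfoc : ∀ y ∈ Set.Ioi (0 : ℝ),
      gradient f (x y) + G y • gradient g (x y) = 0) :
    ∀ y ∈ Set.Ioi (0 : ℝ),
      deriv G y * deriv (fun s => g (x s)) y ≤ 0 := by
  have hfd : Differentiable ℝ f := hf.differentiable (by norm_num)
  have hgd : Differentiable ℝ g := hg.differentiable (by norm_num)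
  -- G is positive on Ioi 0
  have hGpos : ∀ y ∈ Set.Ioi (0 : ℝ), 0 < G y := by
    intro y hy
    rw [hG y hy]
    exact mul_pos hy (Real.exp_pos _)
  -- each x y is a global minimizer of f + G y • g
  have hmin : ∀ y ∈ Set.Ioi (0 : ℝ), ∀ b, f (x y) + G y * g (x y) ≤ f b + G y * g b := by
    intro y hy
    have hFd : Differentiable ℝ (fun z => f z + G y * g z) :=
      hfd.add ((hgd.const_mul (G y)))
    have hFc : ConvexOn ℝ Set.univ (fun z => f z + G y * g z) := by
      have := hfc.add (hgc.smul (hGpos y hy).le)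
      simpa [Pi.smul_apply, smul_eq_mul, Pi.add_def] using this
    have hfder : fderiv ℝ (fun z => f z + G y * g z) (x y)
        = fderiv ℝ f (x y) + G y • fderiv ℝ g (x y) := by
      have h1 : HasFDerivAt (fun z => f z + G y * g z)
          (fderiv ℝ f (x y) + G y • fderiv ℝ g (x y)) (x y) := by
        exact (hfd (x y)).hasFDerivAt.add (((hgd (x y)).hasFDerivAt).const_smul (G y))
      exact h1.fderiv
    have hzero : fderiv ℝ (fun z => f z + G y * g z) (x y) = 0 := by
      have h2 : (toDual ℝ (EuclideanSpace ℝ (Fin N))).symm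
          (fderiv ℝ (fun z => f z + G y * g z) (x y)) = 0 := by
        rw [hfder, map_add, map_smul]
        exact hfoc y hy
      have := congrArg (toDual ℝ (EuclideanSpace ℝ (Fin N))) h2
      simpa using this
    exact aux_min _ hFd hFc (x y) hzero
  -- the key monotone-swap inequality
  have key : ∀ y₁ ∈ Set.Ioi (0 : ℝ), ∀ y₂ ∈ Set.Ioi (0 : ℝ),
      (G y₁ - G y₂) * (g (x y₁) - g (x y₂)) ≤ 0 := by
    intro y₁ h₁ y₂ h₂
    have a1 := hmin y₁ h₁ (x y₂)
    have a2 := hmin y₂ h₂ (x y₁)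
    nlinarith
  intro y hy
  set φ : ℝ → ℝ := fun s => g (x s) with hφdef
  have hφ : DifferentiableAt ℝ φ y := (hgd (x y)).comp y (hx y hy)
  have heq : G =ᶠ[𝓝 y] fun s => s * Real.exp (s * g (x s)) := by
    filter_upwards [isOpen_Ioi.mem_nhds hy] with s hs
    exact hG s hs
  have hGdiff : DifferentiableAt ℝ G y := by
    have : DifferentiableAt ℝ (fun s => s * Real.exp (s * g (x s))) y :=
      differentiableAt_fun_id.mul ((differentiableAt_fun_id.mul hφ).exp)
    exact this.congr_of_eventuallyEq heq
  have hGs := hasDerivAt_iff_tendsto_slope.mp hGdiff.hasDerivAt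
  have hφs := hasDerivAt_iff_tendsto_slope.mp hφ.hasDerivAt
  refine le_of_tendsto (hGs.mul hφs) ?_
  have h1 : ∀ᶠ z in 𝓝[≠] y, z ∈ Set.Ioi (0 : ℝ) :=
    eventually_nhdsWithin_of_eventually_nhds (isOpen_Ioi.eventually_mem hy)
  filter_upwards [h1] with z hz
  rw [slope_def_field, slope_def_field, div_mul_div_comm, ← sq]
  exact div_nonpos_of_nonpos_of_nonneg (key z hz y hy) (sq_nonneg _)
end

section
/- Let ḡ : (0,∞) → ℝ be a continuously differentiable function satisfying (1 + y·ḡ(y))·ḡ'(y) ≤ 0 for all y > 0. If ḡ(ȳ) < 0 for some ȳ > 0, then ḡ(y) < 0 for all y ≥ ȳ. -/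
theorem stmt_4 (gbar : ℝ → ℝ)
    (hsmooth : ContDiffOn ℝ 1 gbar (Set.Ioi 0))
    (hineq : ∀ y ∈ Set.Ioi (0 : ℝ), (1 + y * gbar y) * deriv gbar y ≤ 0)
    (ybar : ℝ) (hybar : 0 < ybar) (hneg : gbar ybar < 0) :
    ∀ y, ybar ≤ y → gbar y < 0 := by
  have hcont : ContinuousOn gbar (Set.Ioi 0) := hsmooth.continuousOn
  have hcontAt : ∀ y : ℝ, 0 < y → ContinuousAt gbar y := fun y hy =>
    hcont.continuousAt (Ioi_mem_nhds hy)
  have hdiff : DifferentiableOn ℝ gbar (Set.Ioi 0) :=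
    hsmooth.differentiableOn one_ne_zero
  by_contra hcon
  push_neg at hcon
  obtain ⟨y₁, hy₁, hgy₁⟩ := hcon
  set S : Set ℝ := {y | ybar ≤ y ∧ 0 ≤ gbar y} with hS
  have hSne : S.Nonempty := ⟨y₁, hy₁, hgy₁⟩
  have hSbdd : BddBelow S := ⟨ybar, fun y hy => hy.1⟩
  set y₀ : ℝ := sInf S with hy₀def
  have hy₀ge : ybar ≤ y₀ := le_csInf hSne fun y hy => hy.1
  have hy₀pos : 0 < y₀ := lt_of_lt_of_le hybar hy₀ge
  -- gbar < 0 on [ybar, y₀)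
  have hltneg : ∀ y, ybar ≤ y → y < y₀ → gbar y < 0 := by
    intro y hy hyy
    by_contra h
    push_neg at h
    exact absurd (csInf_le hSbdd ⟨hy, h⟩) (not_le.mpr hyy)
  -- 0 ≤ gbar y₀
  have h0le : 0 ≤ gbar y₀ := by
    have hyc : y₀ ∈ closure S := csInf_mem_closure hSne hSbdd
    have : (nhdsWithin y₀ S).NeBot := mem_closure_iff_nhdsWithin_neBot.mp hyc
    have htend : Filter.Tendsto gbar (nhdsWithin y₀ S) (nhds (gbar y₀)) :=
      ((hcontAt y₀ hy₀pos).continuousWithinAt).tendsto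
    exact ge_of_tendsto htend (Filter.eventually_of_mem self_mem_nhdsWithin fun y hy => hy.2)
  have hy₀gt : ybar < y₀ :=
    lt_of_le_of_ne hy₀ge (fun h => absurd h0le (not_le.mpr (h ▸ hneg)))
  -- gbar y₀ ≤ 0
  have h0ge : gbar y₀ ≤ 0 := by
    have hyc : y₀ ∈ closure (Set.Ico ybar y₀) := by
      rw [closure_Ico (ne_of_lt hy₀gt)]
      exact Set.right_mem_Icc.mpr (le_of_lt hy₀gt)
    have : (nhdsWithin y₀ (Set.Ico ybar y₀)).NeBot :=
      mem_closure_iff_nhdsWithin_neBot.mp hyc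
    have htend : Filter.Tendsto gbar (nhdsWithin y₀ (Set.Ico ybar y₀)) (nhds (gbar y₀)) :=
      ((hcontAt y₀ hy₀pos).continuousWithinAt).tendsto
    exact le_of_tendsto htend (Filter.eventually_of_mem self_mem_nhdsWithin
      fun y hy => le_of_lt (hltneg y hy.1 hy.2))
  have h0 : gbar y₀ = 0 := le_antisymm h0ge h0le
  -- the function 1 + y * gbar y is positive near y₀
  have hhcont : ContinuousAt (fun y => 1 + y * gbar y) y₀ := by
    exact (continuousAt_const.add (continuousAt_id.mul (hcontAt y₀ hy₀pos)))
  have hpos : ∀ᶠ y in nhds y₀, 0 < 1 + y * gbar y := by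
    have h1 : (0:ℝ) < 1 + y₀ * gbar y₀ := by rw [h0]; simp
    have := hhcont (Ioi_mem_nhds h1)
    exact this
  obtain ⟨ε, hε, hball⟩ := Metric.eventually_nhds_iff.mp hpos
  set c : ℝ := max (y₀ - ε / 2) ((ybar + y₀) / 2) with hc
  have hcyb : ybar < c := lt_of_lt_of_le (by linarith) (le_max_right _ _)
  have hcpos : 0 < c := lt_trans hybar hcyb
  have hcy₀ : c < y₀ := max_lt (by linarith) (by linarith)
  have hsub : Set.Icc c y₀ ⊆ Set.Ioi 0 := fun y hy => lt_of_lt_of_le hcpos hy.1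
  have hposIcc : ∀ y ∈ Set.Icc c y₀, 0 < 1 + y * gbar y := by
    intro y hy
    apply hball
    rw [Real.dist_eq, abs_lt]
    have h1 : y₀ - ε / 2 ≤ c := le_max_left _ _
    constructor <;> [linarith [hy.1]; linarith [hy.2]]
  have hanti : AntitoneOn gbar (Set.Icc c y₀) := by
    apply antitoneOn_of_deriv_nonpos (convex_Icc c y₀) (hcont.mono hsub)
    · rw [interior_Icc]
      exact hdiff.mono fun y hy => hsub ⟨le_of_lt hy.1, le_of_lt hy.2⟩
    · intro x hx
      rw [interior_Icc] at hx
      have hx' : x ∈ Set.Ioi (0:ℝ) := hsub ⟨le_of_lt hx.1, le_of_lt hx.2⟩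
      have h1 := hineq x hx'
      have h2 := hposIcc x ⟨le_of_lt hx.1, le_of_lt hx.2⟩
      nlinarith
  have := hanti (Set.left_mem_Icc.mpr (le_of_lt hcy₀)) (Set.right_mem_Icc.mpr (le_of_lt hcy₀)) (le_of_lt hcy₀)
  have hcneg : gbar c < 0 := hltneg c (le_of_lt hcyb) hcy₀
  linarith [h0 ▸ this]
end

section
/- Let G : (0,∞) → (0,∞) be continuous with G(y) = y·e^{y·ḡ(y)} for a continuously differentiable ḡ satisfying (1 + y ḡ(y)) ḡ'(y) ≤ 0 for all y > 0. If G(ȳ) ≤ ȳ for some ȳ > 0, then G(y) ≤ y for all y ≥ ȳ. -/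
theorem stmt_6 (G gbar : ℝ → ℝ)
    (hGc : ContinuousOn G (Set.Ioi 0))
    (hgs : ContDiffOn ℝ 1 gbar (Set.Ioi 0))
    (hGdef : ∀ y ∈ Set.Ioi (0 : ℝ), G y = y * Real.exp (y * gbar y))
    (hineq : ∀ y ∈ Set.Ioi (0 : ℝ), (1 + y * gbar y) * deriv gbar y ≤ 0)
    (ybar : ℝ) (hybar : 0 < ybar) (hle : G ybar ≤ ybar) :
    ∀ y, ybar ≤ y → G y ≤ y := by
  have hgc : ContinuousOn gbar (Set.Ioi 0) := hgs.continuousOn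
  have hgd : DifferentiableOn ℝ gbar (Set.Ioi 0) := hgs.differentiableOn one_ne_zero
  -- gbar ybar ≤ 0
  have hg0 : gbar ybar ≤ 0 := by
    have h1 := hGdef ybar hybar
    rw [h1] at hle
    have h2 : Real.exp (ybar * gbar ybar) ≤ 1 := by
      nlinarith [Real.exp_pos (ybar * gbar ybar)]
    have h3 : ybar * gbar ybar ≤ 0 := Real.exp_le_one_iff.mp h2
    nlinarith
  -- gbar y ≤ 0 for all y ≥ ybar
  have key : ∀ y, ybar ≤ y → gbar y ≤ 0 := by
    intro y hy
    by_contra hpos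
    push_neg at hpos
    set S : Set ℝ := {t | t ∈ Set.Icc ybar y ∧ gbar t ≤ 0} with hS
    have hIcc : Set.Icc ybar y ⊆ Set.Ioi 0 := fun t ht => lt_of_lt_of_le hybar ht.1
    have hSne : S.Nonempty := ⟨ybar, ⟨le_rfl, hy⟩, hg0⟩
    have hSbdd : BddAbove S := ⟨y, fun t ht => ht.1.2⟩
    have hSclosed : IsClosed S := by
      have : S = Set.Icc ybar y ∩ gbar ⁻¹' Set.Iic 0 := rfl
      rw [this]
      exact (hgc.mono hIcc).preimage_isClosed_of_isClosed isClosed_Icc isClosed_Iic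
    set z := sSup S with hz
    have hzS : z ∈ S := hSclosed.csSup_mem hSne hSbdd
    have hzy : z < y := lt_of_le_of_ne hzS.1.2 (fun h => absurd hzS.2 (not_le.mpr (h ▸ hpos)))
    have hzpos : 0 < z := lt_of_lt_of_le hybar hzS.1.1
    -- gbar > 0 on (z, y]
    have hposOn : ∀ t ∈ Set.Ioc z y, 0 < gbar t := by
      intro t ht
      by_contra h
      push_neg at h
      have : t ∈ S := ⟨⟨le_trans hzS.1.1 ht.1.le, ht.2⟩, h⟩
      exact absurd (le_csSup hSbdd this) (not_le.mpr ht.1)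
    -- gbar antitone on [z, y]
    have hanti : AntitoneOn gbar (Set.Icc z y) := by
      have hsub : Set.Icc z y ⊆ Set.Ioi 0 := fun t ht => lt_of_lt_of_le hzpos ht.1
      apply antitoneOn_of_deriv_nonpos (convex_Icc z y) (hgc.mono hsub)
      · rw [interior_Icc]
        exact hgd.mono (fun t ht => hsub ⟨ht.1.le, ht.2.le⟩)
      · intro t ht
        rw [interior_Icc] at ht
        have htpos : (0:ℝ) < t := hzpos.trans ht.1
        have hgt : 0 < gbar t := hposOn t ⟨ht.1, ht.2.le⟩
        have h1 := hineq t htpos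
        nlinarith [mul_pos htpos hgt]
    have := hanti ⟨le_rfl, hzy.le⟩ ⟨hzy.le, le_rfl⟩ hzy.le
    linarith [hzS.2]
  intro y hy
  have hypos : 0 < y := lt_of_lt_of_le hybar hy
  rw [hGdef y hypos]
  have : y * gbar y ≤ 0 := mul_nonpos_of_nonneg_of_nonpos hypos.le (key y hy)
  nlinarith [Real.exp_le_one_iff.mpr this, Real.exp_pos (y * gbar y)]
end
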